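/- Let d ≥ 1 be an integer, α ∈ (0, d), and let 1 < q ≤ p ≤ d. Let b : ℝ^d → [0,∞) be measurable, A ≥ 0, and assume ∫_B b^p dx ≤ A^p ρ^{d - pα} for every ρ > 0 and every ball B of radius ρ. If additionally b^q is an A_1-weight, i.e. 𝕄(b^q) ≤ C b^q almost everywhere for some constant C, then almost everywhere R_α(b^q) ≤ N A b^{q - 1}, where N depends only on α, d, q, p, C. -/

import Mathlib

open MeasureTheory Metric ENNReal
open scoped FourierTransform

/-- Riesz potential of an `ℝ≥0∞`-valued function:
`R_α g (x) = ∫ g(x+y) |y|^(α-d) dy`. -/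
noncomputable def riesz {d : ℕ} (α : ℝ) (g : EuclideanSpace ℝ (Fin d) → ℝ≥0∞)
    (x : EuclideanSpace ℝ (Fin d)) : ℝ≥0∞ :=
  ∫⁻ y, g (x + y) * ENNReal.ofReal (‖y‖ ^ (α - (d : ℝ)))

/-- Riesz potential of a real-valued function. -/
noncomputable def rieszR {d : ℕ} (α : ℝ) (f : EuclideanSpace ℝ (Fin d) → ℝ)
    (x : EuclideanSpace ℝ (Fin d)) : ℝ :=
  ∫ y, f (x + y) * ‖y‖ ^ (α - (d : ℝ))

/-- Hardy–Littlewood maximal function: sup over balls containing `x`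
of the average of `g` over the ball. -/
noncomputable def maxFun {d : ℕ} (g : EuclideanSpace ℝ (Fin d) → ℝ≥0∞)
    (x : EuclideanSpace ℝ (Fin d)) : ℝ≥0∞ :=
  ⨆ (z : EuclideanSpace ℝ (Fin d)) (r : ℝ) (_ : x ∈ ball z r),
    (∫⁻ y in ball z r, g y) / volume (ball z r)

/-! ### Auxiliary lemmas -/

lemma aux_pow_calc {c R e f : ℝ} (hc : 0 < c) (hR : 0 < R) (j : ℕ) :
    (c^j*R)^e * (c^(j+1)*R)^f = c^f * R^(e+f) * (c^(e+f))^j := by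
  have hcj : (0:ℝ) < c ^ j := pow_pos hc j
  have hcj1 : (0:ℝ) < c ^ (j+1) := pow_pos hc (j+1)
  rw [Real.mul_rpow hcj.le hR.le, Real.mul_rpow hcj1.le hR.le,
    ← Real.rpow_natCast c j, ← Real.rpow_natCast c (j+1),
    ← Real.rpow_natCast (c ^ (e+f)) j,
    ← Real.rpow_mul hc.le, ← Real.rpow_mul hc.le, ← Real.rpow_mul hc.le]
  calc c ^ ((j:ℝ) * e) * R ^ e * (c ^ (((j:ℕ)+1 : ℕ) * f : ℝ) * R ^ f)
      = c ^ ((j:ℝ)*e + ((j:ℕ)+1 : ℕ)*f) * (R^e * R^f) := by rw [Real.rpow_add hc]; ring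
    _ = c ^ (f + (e+f)*(j:ℝ)) * (R^e*R^f) := by
        congr 1
        push_cast; ring
    _ = c ^ f * R ^ (e+f) * c ^ ((e+f)*(j:ℝ)) := by rw [Real.rpow_add hc, Real.rpow_add hR]; ring

lemma aux_tsum_geom {a r : ℝ} (ha : 0 ≤ a) (hr : 0 ≤ r) (K : ℝ≥0∞) :
    ∑' j : ℕ, K * ENNReal.ofReal (a * r ^ j) =
      K * ENNReal.ofReal a * (1 - ENNReal.ofReal r)⁻¹ := by
  have h : ∀ j : ℕ, K * ENNReal.ofReal (a * r ^ j)
      = (K * ENNReal.ofReal a) * (ENNReal.ofReal r) ^ j := by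
    intro j
    rw [ENNReal.ofReal_mul ha, ENNReal.ofReal_pow hr, mul_assoc]
  simp_rw [h]
  rw [ENNReal.tsum_mul_left, ENNReal.tsum_geometric]

lemma aux_cover_near {d : ℕ} {R : ℝ} (hR : 0 < R) {y : EuclideanSpace ℝ (Fin d)}
    (hy : y ∈ ball (0 : EuclideanSpace ℝ (Fin d)) R) (hy0 : y ≠ 0) :
    ∃ j : ℕ, y ∈ ball (0 : EuclideanSpace ℝ (Fin d)) ((2⁻¹:ℝ)^j * R) \
      ball 0 ((2⁻¹:ℝ)^(j+1) * R) := by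
  rw [mem_ball_zero_iff] at hy
  have hy0' : 0 < ‖y‖ := norm_pos_iff.mpr hy0
  have hex : ∃ n : ℕ, (2⁻¹:ℝ)^(n+1) * R ≤ ‖y‖ := by
    obtain ⟨n, hn⟩ := exists_pow_lt_of_lt_one (div_pos hy0' hR) (by norm_num : (2⁻¹:ℝ) < 1)
    have h2 : (2⁻¹:ℝ)^n * R < ‖y‖ := by
      have := mul_lt_mul_of_pos_right hn hR
      rw [div_mul_cancel₀ _ hR.ne'] at this
      exact this
    have h3 : (2⁻¹:ℝ)^(n+1) ≤ (2⁻¹:ℝ)^n :=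
      pow_le_pow_of_le_one (by norm_num) (by norm_num) (by omega)
    exact ⟨n, by nlinarith⟩
  classical
  refine ⟨Nat.find hex, ?_, ?_⟩
  · rw [mem_ball_zero_iff]
    rcases Nat.eq_zero_or_pos (Nat.find hex) with h0 | hpos
    · rw [h0]; simpa using hy
    · obtain ⟨k, hk⟩ := Nat.exists_eq_succ_of_ne_zero hpos.ne'
      have hmin := Nat.find_min hex (m := k) (by omega)
      push_neg at hmin
      rw [hk]; exact hmin
  · intro hmem
    rw [mem_ball_zero_iff] at hmem
    exact absurd (Nat.find_spec hex) (not_le.mpr hmem)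

lemma aux_cover_far {d : ℕ} {R : ℝ} (hR : 0 < R) {y : EuclideanSpace ℝ (Fin d)}
    (hy : y ∉ ball (0 : EuclideanSpace ℝ (Fin d)) R) :
    ∃ j : ℕ, y ∈ ball (0 : EuclideanSpace ℝ (Fin d)) ((2:ℝ)^(j+1) * R) \
      ball 0 ((2:ℝ)^j * R) := by
  rw [mem_ball_zero_iff] at hy
  push_neg at hy
  have hex : ∃ n : ℕ, ‖y‖ < (2:ℝ)^(n+1) * R := by
    obtain ⟨n, hn⟩ := pow_unbounded_of_one_lt (‖y‖ / R) (by norm_num : (1:ℝ) < 2)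
    have h2 : ‖y‖ < 2^n * R := by
      have := mul_lt_mul_of_pos_right hn hR
      rw [div_mul_cancel₀ _ hR.ne'] at this
      exact this
    have h3 : (2:ℝ)^n ≤ 2^(n+1) := pow_le_pow_right₀ (by norm_num) (by omega)
    exact ⟨n, by nlinarith⟩
  classical
  refine ⟨Nat.find hex, ?_, ?_⟩
  · rw [mem_ball_zero_iff]; exact Nat.find_spec hex
  · intro hmem
    rw [mem_ball_zero_iff] at hmem
    rcases Nat.eq_zero_or_pos (Nat.find hex) with h0 | hpos
    · rw [h0] at hmem; simp at hmem; linarith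
    · obtain ⟨k, hk⟩ := Nat.exists_eq_succ_of_ne_zero hpos.ne'
      have hmin := Nat.find_min hex (m := k) (by omega)
      rw [hk] at hmem
      exact hmin hmem

lemma aux_region_est {d : ℕ} {α : ℝ} (hαd : α - d < 0)
    (g : EuclideanSpace ℝ (Fin d) → ℝ≥0∞) (hg : Measurable g) (x : EuclideanSpace ℝ (Fin d))
    {K : ℝ≥0∞} {s : ℝ}
    (hK : ∀ ρ : ℝ, 0 < ρ →
      ∫⁻ y in ball (0 : EuclideanSpace ℝ (Fin d)) ρ, g (x + y) ≤ K * ENNReal.ofReal (ρ ^ s))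
    (u l : ℕ → ℝ) (hl : ∀ j, 0 < l j) (hu : ∀ j, l j ≤ u j)
    (S : Set (EuclideanSpace ℝ (Fin d)))
    (hS : ∀ y ∈ S, y ≠ 0 → ∃ j : ℕ,
      y ∈ ball (0 : EuclideanSpace ℝ (Fin d)) (u j) \ ball 0 (l j)) :
    ∫⁻ y in S, g (x + y) * ENNReal.ofReal (‖y‖ ^ (α - (d:ℝ))) ≤
      ∑' j : ℕ, K * ENNReal.ofReal ((l j) ^ (α - (d:ℝ)) * (u j) ^ s) := by
  set A : ℕ → Set (EuclideanSpace ℝ (Fin d)) :=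
    fun j => ball (0 : EuclideanSpace ℝ (Fin d)) (u j) \ ball 0 (l j) with hA
  set f : EuclideanSpace ℝ (Fin d) → ℝ≥0∞ :=
    fun y => g (x + y) * ENNReal.ofReal (‖y‖ ^ (α - (d:ℝ))) with hf
  have hgx : Measurable fun y : EuclideanSpace ℝ (Fin d) => g (x + y) :=
    hg.comp (measurable_const_add x)
  have hw : Measurable fun y : EuclideanSpace ℝ (Fin d) =>
      ENNReal.ofReal (‖y‖ ^ (α - (d:ℝ))) := by
    exact (measurable_norm.pow_const _).ennreal_ofReal
  have hfm : Measurable f := hgx.mul hw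
  have hAm : MeasurableSet (⋃ j, A j) :=
    MeasurableSet.iUnion fun j => measurableSet_ball.diff measurableSet_ball
  have h1 : ∫⁻ y in S, f y ≤ ∫⁻ y in S, Set.indicator (⋃ j, A j) f y := by
    refine setLIntegral_mono (hfm.indicator hAm) fun y hy => ?_
    by_cases hy0 : y = 0
    · have : f y = 0 := by
        rw [hf]; simp only [hy0, norm_zero]
        rw [Real.zero_rpow hαd.ne, ENNReal.ofReal_zero, mul_zero]
      rw [this]; exact zero_le
    · obtain ⟨j, hj⟩ := hS y hy hy0
      rw [Set.indicator_of_mem (Set.mem_iUnion.mpr ⟨j, hj⟩)]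
  have h2 : ∫⁻ y in S, Set.indicator (⋃ j, A j) f y ≤ ∫⁻ y, Set.indicator (⋃ j, A j) f y :=
    setLIntegral_le_lintegral _ _
  have h3 : ∫⁻ y, Set.indicator (⋃ j, A j) f y = ∫⁻ y in ⋃ j, A j, f y :=
    lintegral_indicator hAm f
  have h4 : ∫⁻ y in ⋃ j, A j, f y ≤ ∑' j, ∫⁻ y in A j, f y := lintegral_iUnion_le _ _
  have h5 : ∀ j, ∫⁻ y in A j, f y ≤ K * ENNReal.ofReal ((l j) ^ (α - (d:ℝ)) * (u j) ^ s) := by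
    intro j
    calc ∫⁻ y in A j, f y
        ≤ ∫⁻ y in A j, ENNReal.ofReal ((l j) ^ (α - (d:ℝ))) * g (x + y) := by
          refine setLIntegral_mono (measurable_const.mul hgx) fun y hy => ?_
          have hly : l j ≤ ‖y‖ := by
            have := hy.2
            rw [mem_ball_zero_iff] at this
            push_neg at this
            exact this
          have hwle : ‖y‖ ^ (α - (d:ℝ)) ≤ (l j) ^ (α - (d:ℝ)) :=
            Real.rpow_le_rpow_of_nonpos (hl j) hly hαd.le
          rw [hf]
          exact le_trans (mul_le_mul' le_rfl (ENNReal.ofReal_le_ofReal hwle))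
            (le_of_eq (mul_comm _ _))
      _ = ENNReal.ofReal ((l j) ^ (α - (d:ℝ))) * ∫⁻ y in A j, g (x + y) :=
          lintegral_const_mul _ hgx
      _ ≤ ENNReal.ofReal ((l j) ^ (α - (d:ℝ))) *
          ∫⁻ y in ball (0 : EuclideanSpace ℝ (Fin d)) (u j), g (x + y) :=
          mul_le_mul' le_rfl (lintegral_mono_set Set.diff_subset)
      _ ≤ ENNReal.ofReal ((l j) ^ (α - (d:ℝ))) * (K * ENNReal.ofReal ((u j) ^ s)) :=
          mul_le_mul' le_rfl (hK (u j) (lt_of_lt_of_le (hl j) (hu j)))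
      _ = K * ENNReal.ofReal ((l j) ^ (α - (d:ℝ)) * (u j) ^ s) := by
          rw [ENNReal.ofReal_mul (Real.rpow_nonneg (hl j).le _)]
          ring
  exact le_trans (le_trans (le_trans h1 h2) (le_of_eq h3)) (le_trans h4 (ENNReal.tsum_le_tsum h5))

lemma aux_near_est {d : ℕ} {α : ℝ} (hαd : α - (d:ℝ) < 0)
    (g : EuclideanSpace ℝ (Fin d) → ℝ≥0∞) (hg : Measurable g)
    (x : EuclideanSpace ℝ (Fin d)) {K : ℝ≥0∞}
    (hK : ∀ ρ : ℝ, 0 < ρ →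
      ∫⁻ y in ball (0 : EuclideanSpace ℝ (Fin d)) ρ, g (x + y) ≤ K * ENNReal.ofReal (ρ ^ ((d:ℝ))))
    {R : ℝ} (hR : 0 < R) :
    ∫⁻ y in ball (0 : EuclideanSpace ℝ (Fin d)) R,
        g (x + y) * ENNReal.ofReal (‖y‖ ^ (α - (d:ℝ))) ≤
      K * ENNReal.ofReal ((2⁻¹:ℝ) ^ (α - (d:ℝ)) * R ^ α) *
        (1 - ENNReal.ofReal ((2⁻¹:ℝ) ^ α))⁻¹ := by
  have hhalf : (0:ℝ) < 2⁻¹ := by norm_num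
  have h1 := aux_region_est hαd g hg x hK (fun j => (2⁻¹:ℝ)^j * R)
    (fun j => (2⁻¹:ℝ)^(j+1) * R)
    (fun j => mul_pos (pow_pos hhalf _) hR)
    (fun j => mul_le_mul_of_nonneg_right
      (pow_le_pow_of_le_one hhalf.le (by norm_num) (by omega)) hR.le)
    (ball 0 R) (fun y hy hy0 => aux_cover_near hR hy hy0)
  refine le_trans h1 (le_of_eq ?_)
  have hterm : ∀ j : ℕ, ((2⁻¹:ℝ)^(j+1)*R) ^ (α - (d:ℝ)) * ((2⁻¹:ℝ)^j*R) ^ ((d:ℝ))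
      = ((2⁻¹:ℝ) ^ (α-(d:ℝ)) * R ^ α) * (((2⁻¹:ℝ)^α)^j) := by
    intro j
    rw [mul_comm, aux_pow_calc hhalf hR j]
    have he : (d:ℝ) + (α - (d:ℝ)) = α := by ring
    rw [he, mul_assoc]
  simp_rw [hterm]
  exact aux_tsum_geom (by positivity) (by positivity) K

lemma aux_far_est {d : ℕ} {α s : ℝ} (hαd : α - (d:ℝ) < 0)
    (g : EuclideanSpace ℝ (Fin d) → ℝ≥0∞) (hg : Measurable g)
    (x : EuclideanSpace ℝ (Fin d)) {K : ℝ≥0∞}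
    (hK : ∀ ρ : ℝ, 0 < ρ →
      ∫⁻ y in ball (0 : EuclideanSpace ℝ (Fin d)) ρ, g (x + y) ≤ K * ENNReal.ofReal (ρ ^ s))
    {R : ℝ} (hR : 0 < R) :
    ∫⁻ y in (ball (0 : EuclideanSpace ℝ (Fin d)) R)ᶜ,
        g (x + y) * ENNReal.ofReal (‖y‖ ^ (α - (d:ℝ))) ≤
      K * ENNReal.ofReal ((2:ℝ) ^ s * R ^ (α - (d:ℝ) + s)) *
        (1 - ENNReal.ofReal ((2:ℝ) ^ (α - (d:ℝ) + s)))⁻¹ := by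
  have h1 := aux_region_est hαd g hg x hK (fun j => (2:ℝ)^(j+1) * R)
    (fun j => (2:ℝ)^j * R)
    (fun j => mul_pos (pow_pos two_pos _) hR)
    (fun j => mul_le_mul_of_nonneg_right
      (pow_le_pow_right₀ (by norm_num) (by omega)) hR.le)
    ((ball 0 R)ᶜ) (fun y hy _ => aux_cover_far hR hy)
  refine le_trans h1 (le_of_eq ?_)
  have hterm : ∀ j : ℕ, ((2:ℝ)^j*R) ^ (α - (d:ℝ)) * ((2:ℝ)^(j+1)*R) ^ s
      = ((2:ℝ) ^ s * R ^ (α - (d:ℝ) + s)) * (((2:ℝ)^(α - (d:ℝ) + s))^j) := by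
    intro j
    rw [aux_pow_calc two_pos hR j, mul_assoc]
  simp_rw [hterm]
  exact aux_tsum_geom (by positivity) (by positivity) K

lemma aux_translate {d : ℕ} (g : EuclideanSpace ℝ (Fin d) → ℝ≥0∞)
    (x : EuclideanSpace ℝ (Fin d)) (ρ : ℝ) :
    ∫⁻ y in ball (0 : EuclideanSpace ℝ (Fin d)) ρ, g (x + y) = ∫⁻ y in ball x ρ, g y := by
  have hpre : (fun y : EuclideanSpace ℝ (Fin d) => x + y) ⁻¹' ball x ρ =
      ball (0 : EuclideanSpace ℝ (Fin d)) ρ := by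
    ext y
    simp [mem_ball, dist_eq_norm]
  rw [← hpre]
  exact (measurePreserving_add_left volume x).setLIntegral_comp_preimage_emb
    (MeasurableEquiv.addLeft x).measurableEmbedding g (ball x ρ)

lemma aux_avg_le_max {d : ℕ} (g : EuclideanSpace ℝ (Fin d) → ℝ≥0∞)
    {x z : EuclideanSpace ℝ (Fin d)} {r : ℝ} (hx : x ∈ ball z r) :
    (∫⁻ y in ball z r, g y) / volume (ball z r) ≤ maxFun g x := by
  refine le_iSup_of_le z ?_
  refine le_iSup_of_le r ?_
  exact le_iSup_of_le hx le_rfl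

lemma aux_ball_le_max {d : ℕ} (g : EuclideanSpace ℝ (Fin d) → ℝ≥0∞)
    {x z : EuclideanSpace ℝ (Fin d)} {r : ℝ} (hx : x ∈ ball z r) :
    ∫⁻ y in ball z r, g y ≤ maxFun g x * volume (ball z r) := by
  have hr : 0 < r := pos_of_mem_ball hx
  exact (ENNReal.div_le_iff_le_mul (Or.inl (measure_ball_pos volume z hr).ne')
    (Or.inl measure_ball_lt_top.ne)).mp (aux_avg_le_max g hx)

lemma aux_zero_of_balls {d : ℕ} (g : EuclideanSpace ℝ (Fin d) → ℝ≥0∞) (hg : Measurable g)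
    (x : EuclideanSpace ℝ (Fin d))
    (h : ∀ n : ℕ, ∫⁻ y in ball x ((n:ℝ)+1), g y = 0) :
    ∀ᵐ y ∂(volume : Measure (EuclideanSpace ℝ (Fin d))), g y = 0 := by
  have huniv : (Set.univ : Set (EuclideanSpace ℝ (Fin d))) = ⋃ n : ℕ, ball x ((n:ℝ)+1) := by
    ext z
    simp only [Set.mem_univ, true_iff, Set.mem_iUnion, mem_ball]
    obtain ⟨n, hn⟩ := exists_nat_gt (dist z x)
    exact ⟨n, by linarith⟩
  have hz : ∫⁻ y, g y = 0 := by
    refine le_antisymm ?_ (zero_le)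
    rw [← setLIntegral_univ, huniv]
    refine le_trans (lintegral_iUnion_le _ _) ?_
    simp [h]
  exact (lintegral_eq_zero_iff hg).mp hz

lemma aux_riesz_zero {d : ℕ} (α : ℝ) (g : EuclideanSpace ℝ (Fin d) → ℝ≥0∞)
    (h : ∀ᵐ y ∂(volume : Measure (EuclideanSpace ℝ (Fin d))), g y = 0)
    (x : EuclideanSpace ℝ (Fin d)) : riesz α g x = 0 := by
  have hqmp := (measurePreserving_add_left
    (volume : Measure (EuclideanSpace ℝ (Fin d))) x).quasiMeasurePreserving
  have h' : ∀ᵐ y ∂(volume : Measure (EuclideanSpace ℝ (Fin d))), g (x + y) = 0 :=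
    hqmp.ae_eq h
  rw [riesz]
  rw [lintegral_congr_ae (h'.mono fun y hy => by rw [hy, zero_mul])]
  simp

lemma aux_morrey_q {d : ℕ} (hd : 1 ≤ d) {α q p A : ℝ} (hq : 1 < q) (hqp : q ≤ p)
    (b : EuclideanSpace ℝ (Fin d) → ℝ) (hb : Measurable b)
    (hbnn : ∀ x, 0 ≤ b x) (hA : 0 ≤ A)
    (hM : ∀ (x : EuclideanSpace ℝ (Fin d)) (ρ : ℝ), 0 < ρ →
      ∫⁻ y in ball x ρ, ENNReal.ofReal (b y ^ p) ≤
        ENNReal.ofReal (A ^ p * ρ ^ ((d:ℝ) - p * α)))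
    (z : EuclideanSpace ℝ (Fin d)) (ρ : ℝ) (hρ : 0 < ρ) :
    ∫⁻ y in ball z ρ, ENNReal.ofReal (b y ^ q) ≤
      (ENNReal.ofReal (A ^ q) *
        (volume (ball (0 : EuclideanSpace ℝ (Fin d)) 1)) ^ (1 - q/p)) *
        ENNReal.ofReal (ρ ^ ((d:ℝ) - q * α)) := by
  haveI : Nontrivial (EuclideanSpace ℝ (Fin d)) :=
    Module.nontrivial_of_finrank_pos (by rw [finrank_euclideanSpace_fin]; omega)
  have hq0 : (0:ℝ) < q := lt_trans zero_lt_one hq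
  have hp0 : (0:ℝ) < p := lt_of_lt_of_le hq0 hqp
  set μ := volume.restrict (ball z ρ) with hμ
  have hbq : ∀ y, ((‖b y‖₊ : ℝ≥0∞)) ^ q = ENNReal.ofReal (b y ^ q) := fun y => by
    rw [← enorm_eq_nnnorm, Real.enorm_eq_ofReal (hbnn y), ENNReal.ofReal_rpow_of_nonneg (hbnn y) hq0.le]
  have hbp : ∀ y, ((‖b y‖₊ : ℝ≥0∞)) ^ p = ENNReal.ofReal (b y ^ p) := fun y => by
    rw [← enorm_eq_nnnorm, Real.enorm_eq_ofReal (hbnn y), ENNReal.ofReal_rpow_of_nonneg (hbnn y) hp0.le]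
  have hqne : (ENNReal.ofReal q) ≠ 0 := by simp [ENNReal.ofReal_eq_zero, not_le, hq0]
  have hpne : (ENNReal.ofReal p) ≠ 0 := by simp [ENNReal.ofReal_eq_zero, not_le, hp0]
  have e1 : eLpNorm b (ENNReal.ofReal q) μ = (∫⁻ y, ENNReal.ofReal (b y ^ q) ∂μ) ^ (1/q) := by
    rw [eLpNorm_eq_lintegral_rpow_enorm_toReal hqne ENNReal.ofReal_ne_top,
      ENNReal.toReal_ofReal hq0.le]
    congr 1
    exact lintegral_congr fun y => hbq y
  have e2 : eLpNorm b (ENNReal.ofReal p) μ = (∫⁻ y, ENNReal.ofReal (b y ^ p) ∂μ) ^ (1/p) := by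
    rw [eLpNorm_eq_lintegral_rpow_enorm_toReal hpne ENNReal.ofReal_ne_top,
      ENNReal.toReal_ofReal hp0.le]
    congr 1
    exact lintegral_congr fun y => hbp y
  have key : eLpNorm b (ENNReal.ofReal q) μ ≤
      eLpNorm b (ENNReal.ofReal p) μ * (μ Set.univ) ^ (1/q - 1/p) := by
    have h := eLpNorm_le_eLpNorm_mul_rpow_measure_univ (μ := μ) (f := b)
      (ENNReal.ofReal_le_ofReal hqp) hb.aestronglyMeasurable
    rwa [ENNReal.toReal_ofReal hq0.le, ENNReal.toReal_ofReal hp0.le] at h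
  have hμuniv : μ Set.univ = ENNReal.ofReal (ρ ^ ((d:ℝ))) *
      volume (ball (0 : EuclideanSpace ℝ (Fin d)) 1) := by
    rw [hμ, Measure.restrict_apply_univ, Measure.addHaar_ball volume z hρ.le,
      finrank_euclideanSpace_fin, Real.rpow_natCast]
  have hX : ∫⁻ y, ENNReal.ofReal (b y ^ q) ∂μ =
      (eLpNorm b (ENNReal.ofReal q) μ) ^ q := by
    rw [e1, ← ENNReal.rpow_mul, one_div, inv_mul_cancel₀ hq0.ne', ENNReal.rpow_one]
  have step : (eLpNorm b (ENNReal.ofReal q) μ) ^ q ≤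
      ((∫⁻ y, ENNReal.ofReal (b y ^ p) ∂μ) ^ (1/p)) ^ q *
        ((μ Set.univ) ^ (1/q - 1/p)) ^ q := by
    rw [← ENNReal.mul_rpow_of_nonneg _ _ hq0.le, ← e2]
    exact ENNReal.rpow_le_rpow key hq0.le
  have hMp : ∫⁻ y, ENNReal.ofReal (b y ^ p) ∂μ ≤
      ENNReal.ofReal (A ^ p * ρ ^ ((d:ℝ) - p * α)) := hM z ρ hρ
  have step2 : ((∫⁻ y, ENNReal.ofReal (b y ^ p) ∂μ) ^ (1/p)) ^ q ≤
      ((ENNReal.ofReal (A ^ p * ρ ^ ((d:ℝ) - p * α))) ^ (1/p)) ^ q :=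
    ENNReal.rpow_le_rpow (ENNReal.rpow_le_rpow hMp (by positivity)) hq0.le
  have hrhs : ((ENNReal.ofReal (A ^ p * ρ ^ ((d:ℝ) - p * α))) ^ (1/p)) ^ q *
      ((μ Set.univ) ^ (1/q - 1/p)) ^ q =
      (ENNReal.ofReal (A ^ q) *
        (volume (ball (0 : EuclideanSpace ℝ (Fin d)) 1)) ^ (1 - q/p)) *
        ENNReal.ofReal (ρ ^ ((d:ℝ) - q * α)) := by
    have hnn1 : (0:ℝ) ≤ 1/q - 1/p :=
      sub_nonneg.mpr (one_div_le_one_div_of_le hq0 hqp)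
    have hnn2 : (0:ℝ) ≤ 1 - q/p := sub_nonneg.mpr ((div_le_one hp0).mpr hqp)
    rw [← ENNReal.rpow_mul, ← ENNReal.rpow_mul, hμuniv,
      ENNReal.mul_rpow_of_nonneg _ _ (mul_nonneg hnn1 hq0.le)]
    have hexp1 : (1/q - 1/p) * q = 1 - q/p := by field_simp
    have hexp2 : (1/p) * q = q/p := by field_simp
    rw [hexp1, hexp2]
    rw [ENNReal.ofReal_rpow_of_nonneg (by positivity) (by positivity : (0:ℝ) ≤ q/p),
      ENNReal.ofReal_rpow_of_nonneg (by positivity) hnn2]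
    rw [Real.mul_rpow (by positivity) (by positivity)]
    rw [← Real.rpow_mul hρ.le, ← Real.rpow_mul hρ.le, ← Real.rpow_mul hA]
    have hAq : A ^ (p * (q/p)) = A ^ q := by rw [mul_div_cancel₀ _ hp0.ne']
    rw [hAq]
    have hρexp : ((d:ℝ) - p*α) * (q/p) + (d:ℝ) * (1 - q/p) = (d:ℝ) - q * α := by
      field_simp; ring
    have hcomb : ENNReal.ofReal (ρ ^ (((d:ℝ) - p*α) * (q/p))) *
        ENNReal.ofReal (ρ ^ ((d:ℝ) * (1 - q/p))) =
        ENNReal.ofReal (ρ ^ ((d:ℝ) - q * α)) := by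
      rw [← ENNReal.ofReal_mul (by positivity), ← Real.rpow_add hρ, hρexp]
    rw [ENNReal.ofReal_mul (Real.rpow_nonneg hA q), ← hcomb]
    ring
  calc ∫⁻ y in ball z ρ, ENNReal.ofReal (b y ^ q)
      = ∫⁻ y, ENNReal.ofReal (b y ^ q) ∂μ := rfl
    _ = (eLpNorm b (ENNReal.ofReal q) μ) ^ q := hX
    _ ≤ ((∫⁻ y, ENNReal.ofReal (b y ^ p) ∂μ) ^ (1/p)) ^ q *
        ((μ Set.univ) ^ (1/q - 1/p)) ^ q := step
    _ ≤ ((ENNReal.ofReal (A ^ p * ρ ^ ((d:ℝ) - p * α))) ^ (1/p)) ^ q *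
        ((μ Set.univ) ^ (1/q - 1/p)) ^ q := mul_le_mul' step2 le_rfl
    _ = _ := hrhs

/-- If `b` satisfies the Morrey condition with exponent `p`, `1 < q ≤ p ≤ d`, and
`b^q` is an `A_1`-weight (`𝕄(b^q) ≤ C b^q` a.e.), then a.e.
`R_α(b^q) ≤ N A b^(q-1)` with `N = N(α,d,q,p,C)`. -/
theorem riesz_pow_le_of_A1
    (d : ℕ) (hd : 1 ≤ d) (α q p : ℝ) (hα0 : 0 < α) (hαd : α < d)
    (hq : 1 < q) (hqp : q ≤ p) (hpd : p ≤ d) (C : ℝ) :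
    ∃ N : ℝ, 0 < N ∧
      ∀ b : EuclideanSpace ℝ (Fin d) → ℝ, Measurable b → (∀ x, 0 ≤ b x) →
      ∀ A : ℝ, 0 ≤ A →
      (∀ (x : EuclideanSpace ℝ (Fin d)) (ρ : ℝ), 0 < ρ →
        ∫⁻ y in ball x ρ, ENNReal.ofReal (b y ^ p) ≤
          ENNReal.ofReal (A ^ p * ρ ^ ((d : ℝ) - p * α))) →
      (∀ᵐ x ∂(volume : Measure (EuclideanSpace ℝ (Fin d))),
        maxFun (fun y => ENNReal.ofReal (b y ^ q)) x ≤
          ENNReal.ofReal (C * b x ^ q)) →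
      ∀ᵐ x ∂(volume : Measure (EuclideanSpace ℝ (Fin d))),
        riesz α (fun y => ENNReal.ofReal (b y ^ q)) x ≤
          ENNReal.ofReal (N * A * b x ^ (q - 1)) := by
  classical
  haveI : Nontrivial (EuclideanSpace ℝ (Fin d)) :=
    Module.nontrivial_of_finrank_pos (by rw [finrank_euclideanSpace_fin]; omega)
  have hq0 : (0:ℝ) < q := lt_trans zero_lt_one hq
  have hp0 : (0:ℝ) < p := lt_of_lt_of_le hq0 hqp
  have hαd' : α - (d:ℝ) < 0 := sub_neg.mpr hαd
  set v1 := volume (ball (0 : EuclideanSpace ℝ (Fin d)) 1) with hv1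
  have hv1top : v1 ≠ ⊤ := measure_ball_lt_top.ne
  set Cp := max C 0 with hCp
  set D1 : ℝ≥0∞ := ENNReal.ofReal Cp * v1 * ENNReal.ofReal ((2⁻¹:ℝ) ^ (α - (d:ℝ))) *
      (1 - ENNReal.ofReal ((2⁻¹:ℝ) ^ α))⁻¹ with hD1
  set D2 : ℝ≥0∞ := v1 ^ (1 - q/p) * ENNReal.ofReal ((2:ℝ) ^ ((d:ℝ) - q*α)) *
      (1 - ENNReal.ofReal ((2:ℝ) ^ (α - (d:ℝ) + ((d:ℝ) - q*α))))⁻¹ with hD2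
  have hr1 : ENNReal.ofReal ((2⁻¹:ℝ) ^ α) < 1 := by
    rw [ENNReal.ofReal_lt_one]
    exact Real.rpow_lt_one (by norm_num) (by norm_num) hα0
  have hr2 : ENNReal.ofReal ((2:ℝ) ^ (α - (d:ℝ) + ((d:ℝ) - q*α))) < 1 := by
    rw [ENNReal.ofReal_lt_one]
    apply Real.rpow_lt_one_of_one_lt_of_neg (by norm_num)
    nlinarith [mul_pos hα0 (sub_pos.mpr hq)]
  have hnn2 : (0:ℝ) ≤ 1 - q/p := sub_nonneg.mpr ((div_le_one hp0).mpr hqp)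
  have hD1top : D1 ≠ ⊤ := by
    rw [hD1]
    refine ENNReal.mul_ne_top (ENNReal.mul_ne_top
      (ENNReal.mul_ne_top ENNReal.ofReal_ne_top hv1top) ENNReal.ofReal_ne_top) ?_
    rw [Ne, ENNReal.inv_eq_top]
    exact (tsub_pos_of_lt hr1).ne'
  have hD2top : D2 ≠ ⊤ := by
    rw [hD2]
    refine ENNReal.mul_ne_top (ENNReal.mul_ne_top
      (ENNReal.rpow_lt_top_of_nonneg hnn2 hv1top).ne ENNReal.ofReal_ne_top) ?_
    rw [Ne, ENNReal.inv_eq_top]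
    exact (tsub_pos_of_lt hr2).ne'
  have hDfin : D1 + D2 ≠ ⊤ := ENNReal.add_ne_top.mpr ⟨hD1top, hD2top⟩
  refine ⟨(D1 + D2).toReal + 1,
    add_pos_of_nonneg_of_pos ENNReal.toReal_nonneg one_pos, ?_⟩
  intro b hb hbnn A hA hM hmax
  set g : EuclideanSpace ℝ (Fin d) → ℝ≥0∞ := fun y => ENNReal.ofReal (b y ^ q) with hg
  have hgm : Measurable g := (hb.pow_const q).ennreal_ofReal
  filter_upwards [hmax] with x hx
  rcases eq_or_lt_of_le (hbnn x) with hbx0 | hbx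
  · -- b x = 0
    have hzero : ∀ n : ℕ, ∫⁻ y in ball x ((n:ℝ)+1), g y = 0 := by
      intro n
      have h1 : (∫⁻ y in ball x ((n:ℝ)+1), g y) / volume (ball x ((n:ℝ)+1)) ≤ 0 := by
        refine le_trans (aux_avg_le_max g (mem_ball_self (by positivity))) ?_
        calc maxFun g x ≤ ENNReal.ofReal (C * b x ^ q) := hx
          _ = 0 := by
              rw [← hbx0, Real.zero_rpow hq0.ne', mul_zero, ENNReal.ofReal_zero]
      have h2 : (∫⁻ y in ball x ((n:ℝ)+1), g y) / volume (ball x ((n:ℝ)+1)) = 0 :=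
        le_antisymm h1 (zero_le)
      rcases ENNReal.div_eq_zero_iff.mp h2 with h | h
      · exact h
      · exact absurd h measure_ball_lt_top.ne
    have hnull := aux_zero_of_balls g hgm x hzero
    rw [aux_riesz_zero α g hnull x]
    exact zero_le
  rcases eq_or_lt_of_le hA with hA0 | hApos
  · -- A = 0
    have hzero : ∀ n : ℕ, ∫⁻ y in ball x ((n:ℝ)+1), ENNReal.ofReal (b y ^ p) = 0 := by
      intro n
      refine le_antisymm (le_trans (hM x _ (by positivity)) (le_of_eq ?_)) (zero_le)
      rw [← hA0, Real.zero_rpow hp0.ne', zero_mul, ENNReal.ofReal_zero]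
    have hbnull := aux_zero_of_balls _ ((hb.pow_const p).ennreal_ofReal) x hzero
    have hnull : ∀ᵐ y ∂(volume : Measure (EuclideanSpace ℝ (Fin d))), g y = 0 := by
      refine hbnull.mono fun y hy => ?_
      have hle : b y ^ p ≤ 0 := ENNReal.ofReal_eq_zero.mp hy
      have hge : 0 ≤ b y ^ p := Real.rpow_nonneg (hbnn y) p
      have hbp0 : b y ^ p = 0 := le_antisymm hle hge
      have hb0 : b y = 0 := by
        by_contra h
        have hby : 0 < b y := lt_of_le_of_ne (hbnn y) (Ne.symm h)
        exact absurd hbp0 (ne_of_gt (Real.rpow_pos_of_pos hby p))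
      rw [hg]
      simp only [hb0]
      rw [Real.zero_rpow hq0.ne', ENNReal.ofReal_zero]
    rw [aux_riesz_zero α g hnull x]
    exact zero_le
  · -- main case : 0 < b x, 0 < A
    set R := (A / b x) ^ (α⁻¹) with hRdef
    have htpos : 0 < A / b x := div_pos hApos hbx
    have hR : 0 < R := Real.rpow_pos_of_pos htpos _
    have hKnear : ∀ ρ : ℝ, 0 < ρ →
        ∫⁻ y in ball (0 : EuclideanSpace ℝ (Fin d)) ρ, g (x + y) ≤
          (maxFun g x * v1) * ENNReal.ofReal (ρ ^ ((d:ℝ))) := by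
      intro ρ hρ
      rw [aux_translate g x ρ]
      refine le_trans (aux_ball_le_max g (mem_ball_self hρ)) ?_
      rw [Measure.addHaar_ball volume x hρ.le, finrank_euclideanSpace_fin, ← hv1,
        ← Real.rpow_natCast ρ d]
      exact le_of_eq (by ring)
    have hKfar : ∀ ρ : ℝ, 0 < ρ →
        ∫⁻ y in ball (0 : EuclideanSpace ℝ (Fin d)) ρ, g (x + y) ≤
          (ENNReal.ofReal (A ^ q) * v1 ^ (1 - q/p)) *
            ENNReal.ofReal (ρ ^ ((d:ℝ) - q*α)) := by
      intro ρ hρ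
      rw [aux_translate g x ρ]
      exact aux_morrey_q hd hq hqp b hb hbnn hA hM x ρ hρ
    have hnear := aux_near_est hαd' g hgm x hKnear hR
    have hfar := aux_far_est (s := (d:ℝ) - q*α) hαd' g hgm x hKfar hR
    have hsplit : riesz α g x =
        (∫⁻ y in ball (0 : EuclideanSpace ℝ (Fin d)) R,
          g (x + y) * ENNReal.ofReal (‖y‖ ^ (α - (d:ℝ)))) +
        ∫⁻ y in (ball (0 : EuclideanSpace ℝ (Fin d)) R)ᶜ,
          g (x + y) * ENNReal.ofReal (‖y‖ ^ (α - (d:ℝ))) := by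
      rw [riesz]
      exact (lintegral_add_compl _ measurableSet_ball).symm
    have hRα : R ^ α = A / b x := Real.rpow_inv_rpow htpos.le hα0.ne'
    have hRfar : R ^ (α - (d:ℝ) + ((d:ℝ) - q*α)) = (A / b x) ^ (1 - q) := by
      have hE : α - (d:ℝ) + ((d:ℝ) - q*α) = α * (1-q) := by ring
      rw [hE, hRdef, ← Real.rpow_mul htpos.le]
      congr 1
      field_simp
    set s0 := A * b x ^ (q - 1) with hs0
    have hbq1nn : (0:ℝ) ≤ b x ^ (q-1) := Real.rpow_nonneg hbx.le _
    have hs0nn : 0 ≤ s0 := mul_nonneg hA hbq1nn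
    have hnear2 : maxFun g x * v1 *
        ENNReal.ofReal ((2⁻¹:ℝ) ^ (α - (d:ℝ)) * R ^ α) *
        (1 - ENNReal.ofReal ((2⁻¹:ℝ) ^ α))⁻¹ ≤ D1 * ENNReal.ofReal s0 := by
      have hmax' : maxFun g x ≤ ENNReal.ofReal (Cp * b x ^ q) :=
        le_trans hx (ENNReal.ofReal_le_ofReal
          (mul_le_mul_of_nonneg_right (le_max_left C 0) (Real.rpow_nonneg hbx.le q)))
      calc maxFun g x * v1 * ENNReal.ofReal ((2⁻¹:ℝ) ^ (α - (d:ℝ)) * R ^ α) *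
            (1 - ENNReal.ofReal ((2⁻¹:ℝ) ^ α))⁻¹
          ≤ ENNReal.ofReal (Cp * b x ^ q) * v1 *
            ENNReal.ofReal ((2⁻¹:ℝ) ^ (α - (d:ℝ)) * R ^ α) *
            (1 - ENNReal.ofReal ((2⁻¹:ℝ) ^ α))⁻¹ := by gcongr
        _ = D1 * ENNReal.ofReal s0 := by
            rw [hRα, hD1]
            have h9 : b x ^ q * (A / b x) = A * b x ^ (q-1) := by
              have h8 : b x ^ q / b x = b x ^ (q-1) := by
                rw [Real.rpow_sub hbx, Real.rpow_one]
              rw [← h8]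
              field_simp
            have hof : ENNReal.ofReal (b x ^ q) * ENNReal.ofReal (A / b x) =
                ENNReal.ofReal s0 := by
              rw [← ENNReal.ofReal_mul (Real.rpow_nonneg hbx.le q), h9, hs0]
            rw [ENNReal.ofReal_mul (show (0:ℝ) ≤ Cp from le_max_right C 0),
              ENNReal.ofReal_mul (show (0:ℝ) ≤ (2⁻¹:ℝ)^(α-(d:ℝ)) by positivity),
              ← hof]
            ring
    have hfar2 : ENNReal.ofReal (A ^ q) * v1 ^ (1 - q/p) *
        ENNReal.ofReal ((2:ℝ) ^ ((d:ℝ) - q*α) * R ^ (α - (d:ℝ) + ((d:ℝ) - q*α))) *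
        (1 - ENNReal.ofReal ((2:ℝ) ^ (α - (d:ℝ) + ((d:ℝ) - q*α))))⁻¹ ≤
          D2 * ENNReal.ofReal s0 := by
      rw [hRfar, hD2]
      have ht1q : (A / b x) ^ (1 - q) = A ^ (1-q) * b x ^ (q-1) := by
        rw [Real.div_rpow hA hbx.le]
        rw [show (1-q : ℝ) = -(q-1) by ring, Real.rpow_neg hbx.le]
        rw [div_eq_mul_inv, inv_inv]
      have hAq : A ^ q * A ^ (1-q) = A := by
        rw [← Real.rpow_add hApos]
        norm_num
      have hreal : A ^ q * ((2:ℝ) ^ ((d:ℝ) - q*α) * (A / b x) ^ (1 - q)) =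
          ((2:ℝ) ^ ((d:ℝ) - q*α)) * s0 := by
        rw [ht1q, hs0]
        calc A ^ q * ((2:ℝ) ^ ((d:ℝ) - q*α) * (A ^ (1-q) * b x ^ (q-1)))
            = (A ^ q * A ^ (1-q)) * ((2:ℝ) ^ ((d:ℝ) - q*α) * b x ^ (q-1)) := by ring
          _ = (2:ℝ) ^ ((d:ℝ) - q*α) * (A * b x ^ (q-1)) := by rw [hAq]; ring
      refine le_of_eq ?_
      rw [mul_comm (ENNReal.ofReal (A ^ q)) (v1 ^ (1 - q/p)), mul_assoc (v1 ^ (1 - q/p)),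
        ← ENNReal.ofReal_mul (by positivity), hreal,
        ENNReal.ofReal_mul (by positivity)]
      ring
    calc riesz α g x = _ := hsplit
      _ ≤ D1 * ENNReal.ofReal s0 + D2 * ENNReal.ofReal s0 :=
          add_le_add (le_trans hnear hnear2) (le_trans hfar hfar2)
      _ = (D1 + D2) * ENNReal.ofReal s0 := (add_mul _ _ _).symm
      _ ≤ ENNReal.ofReal ((D1 + D2).toReal + 1) * ENNReal.ofReal s0 := by
          refine mul_le_mul' ?_ le_rfl
          calc D1 + D2 = ENNReal.ofReal (D1 + D2).toReal :=
                (ENNReal.ofReal_toReal hDfin).symm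
            _ ≤ _ := ENNReal.ofReal_le_ofReal (by linarith)
      _ = ENNReal.ofReal (((D1 + D2).toReal + 1) * A * b x ^ (q - 1)) := by
          rw [← ENNReal.ofReal_mul (by positivity), hs0, mul_assoc]
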